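/- Fix a composition n = n₁ + … + n_r with consecutive blocks B₁,…,B_r, Young subgroup W_L = {w ∈ S_n : w(B_i) = B_i ∀i}, and W(L) the group of rigid block permutations preserving block sizes (w maps the j-th element of B_i to the j-th element of B_{τ(i)} for some τ with n_{τ(i)} = n_i). Let q be a prime power, ζ a generator of 𝔽_q^×, and ρ(ζ) = (ζ^{n−1}, ζ^{n−2}, …, ζ, 1) ∈ (𝔽_q^×)^n. Let S_n act on (𝔽_q^×)^n by (σ·t)_j = t_{σ⁻¹(j)} and define the dot action by w•t = (w·(t·ρ(ζ)))·ρ(ζ)^{−1} (componentwise products and inverse). Then for every w ∈ W(L), ν ∈ W_L and t ∈ (𝔽_q^×)^n: w•(ν·t) = (wνw⁻¹)·(w•t), with wνw⁻¹ ∈ W_L. In particular the dot action of W(L) on the finite torus (𝔽_q^×)^n descends to a well-defined action on (𝔽_q^×)^n / W_L. -/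

import Mathlib

/-! A composition `n = n₁ + … + n_r` with consecutive blocks `B₁,…,B_r` is encoded by a
monotone surjective map `b : Fin n → Fin r`: the block `B_i` is the fiber `b⁻¹(i)`. -/

/-- The size `n_i` of the block `B_i`. -/
def blockSize {n r : ℕ} (b : Fin n → Fin r) (i : Fin r) : ℕ :=
  (Finset.univ.filter fun x => b x = i).card

/-- The start of the block `B_i`. -/
def blockStart {n r : ℕ} (b : Fin n → Fin r) (i : Fin r) : ℕ :=
  (Finset.univ.filter fun x => b x < i).card

/-- The position of `x` inside its block. -/
def blockPos {n r : ℕ} (b : Fin n → Fin r) (x : Fin n) : ℕ := (x : ℕ) - blockStart b (b x)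

/-- Membership in the Young subgroup `W_L = {w ∈ S_n : w(B_i) = B_i for all i}`. -/
def InYoung {n r : ℕ} (b : Fin n → Fin r) (w : Equiv.Perm (Fin n)) : Prop :=
  ∀ x, b (w x) = b x

/-- `w ∈ W(L)`: `w` is a rigid block permutation preserving block sizes. -/
def IsRigidBlockPerm {n r : ℕ} (b : Fin n → Fin r) (w : Equiv.Perm (Fin n)) : Prop :=
  ∃ τ : Equiv.Perm (Fin r), (∀ i, blockSize b (τ i) = blockSize b i) ∧
    ∀ x, b (w x) = τ (b x) ∧ blockPos b (w x) = blockPos b x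

/-- `ρ(ζ) = (ζ^{n-1}, ζ^{n-2}, …, ζ, 1) ∈ (𝔽_q^×)^n`. -/
def rhoZeta {F : Type*} [Field F] (n : ℕ) (ζ : Fˣ) : Fin n → Fˣ :=
  fun i => ζ ^ (n - 1 - (i : ℕ))

/-- The natural permutation action of `S_n` on `(𝔽_q^×)^n`: `(w·t)_j = t_{w⁻¹(j)}`. -/
def permActF {F : Type*} [Field F] {n : ℕ} (w : Equiv.Perm (Fin n)) (t : Fin n → Fˣ) :
    Fin n → Fˣ := fun j => t (w⁻¹ j)

/-- The dot action on the finite torus: `w • t = (w·(t·ρ(ζ)))·ρ(ζ)⁻¹`. -/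
def dotActF {F : Type*} [Field F] {n : ℕ} (ζ : Fˣ) (w : Equiv.Perm (Fin n))
    (t : Fin n → Fˣ) : Fin n → Fˣ :=
  permActF w (t * rhoZeta n ζ) * (rhoZeta n ζ)⁻¹

lemma blockStart_le_aux {n r : ℕ} (b : Fin n → Fin r) (hb : Monotone b) (x : Fin n) :
    blockStart b (b x) ≤ (x : ℕ) := by
  unfold blockStart
  calc (Finset.univ.filter fun y => b y < b x).card
      ≤ (Finset.univ.filter fun y : Fin n => y < x).card := by
        apply Finset.card_le_card
        intro y hy
        simp only [Finset.mem_filter, Finset.mem_univ, true_and] at *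
        by_contra h
        exact absurd (hb (not_lt.mp h)) (not_le.mpr hy)
    _ = (x : ℕ) := by
        rw [show (Finset.univ.filter fun y : Fin n => y < x) = Finset.Iio x by
          ext y; simp]
        exact Fin.card_Iio x

theorem Equiv.Perm.apply_inv_self {α : Type*} (f : Equiv.Perm α) (x : α) : f (f⁻¹ x) = x :=
  f.apply_symm_apply x

theorem Equiv.Perm.inv_apply_self {α : Type*} (f : Equiv.Perm α) (x : α) : f⁻¹ (f x) = x :=
  f.symm_apply_apply x

theorem stmt14 {F : Type*} [Field F] [Fintype F] (n r q : ℕ)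
    (hq : Fintype.card F = q) (hq' : IsPrimePow q)
    (ζ : Fˣ) (hζ : ∀ u : Fˣ, u ∈ Subgroup.zpowers ζ)
    (b : Fin n → Fin r) (hb : Monotone b) (hbs : Function.Surjective b)
    (w : Equiv.Perm (Fin n)) (hw : IsRigidBlockPerm b w) :
    -- `w•(ν·t) = (wνw⁻¹)·(w•t)` with `wνw⁻¹ ∈ W_L`
    (∀ ν : Equiv.Perm (Fin n), InYoung b ν →
      InYoung b (w * ν * w⁻¹) ∧
      ∀ t : Fin n → Fˣ, dotActF ζ w (permActF ν t) = permActF (w * ν * w⁻¹) (dotActF ζ w t)) ∧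
    -- hence the dot action of `W(L)` descends to the orbit set `(𝔽_q^×)^n / W_L`
    (∀ t t' : Fin n → Fˣ, (∃ ν : Equiv.Perm (Fin n), InYoung b ν ∧ t' = permActF ν t) →
      ∃ ν' : Equiv.Perm (Fin n), InYoung b ν' ∧ dotActF ζ w t' = permActF ν' (dotActF ζ w t)) := by
  obtain ⟨τ, hτsize, hτ⟩ := hw
  have hpos : ∀ x : Fin n, blockStart b (b x) + blockPos b x = (x : ℕ) := fun x =>
    Nat.add_sub_cancel' (blockStart_le_aux b hb x)
  have hwx : ∀ x : Fin n, (w x : ℕ) = blockStart b (τ (b x)) + blockPos b x := by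
    intro x
    have h1 := hpos (w x)
    rw [(hτ x).1, (hτ x).2] at h1
    omega
  have hdiff : ∀ x : Fin n, (w x : ℤ) - (x : ℤ) =
      (blockStart b (τ (b x)) : ℤ) - blockStart b (b x) := by
    intro x
    have h1 := hpos x; have h2 := hwx x
    omega
  have key : ∀ a c : Fin n, b a = b c →
      rhoZeta n ζ a * (rhoZeta n ζ (w a))⁻¹ = rhoZeta n ζ c * (rhoZeta n ζ (w c))⁻¹ := by
    intro a c h
    have hd : (w a : ℤ) - (a : ℤ) = (w c : ℤ) - (c : ℤ) := by
      rw [hdiff a, hdiff c, h]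
    unfold rhoZeta
    rw [← zpow_natCast ζ (n - 1 - (a : ℕ)), ← zpow_natCast ζ (n - 1 - ((w a) : ℕ)),
        ← zpow_natCast ζ (n - 1 - (c : ℕ)), ← zpow_natCast ζ (n - 1 - ((w c) : ℕ)),
        ← zpow_sub, ← zpow_sub]
    congr 1
    have h1 := a.isLt; have h2 := c.isLt; have h3 := (w a).isLt; have h4 := (w c).isLt
    omega
  have hmain : ∀ ν : Equiv.Perm (Fin n), InYoung b ν →
      InYoung b (w * ν * w⁻¹) ∧
      ∀ t : Fin n → Fˣ, dotActF ζ w (permActF ν t) = permActF (w * ν * w⁻¹) (dotActF ζ w t) := by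
    intro ν hν
    constructor
    · intro x
      have hx : b x = τ (b (w⁻¹ x)) := by
        conv_lhs => rw [← Equiv.Perm.apply_inv_self w x]
        exact (hτ _).1
      simp only [Equiv.Perm.mul_apply]
      rw [(hτ _).1, hν, ← hx]
    · intro t
      funext j
      have hkey := key (ν (ν⁻¹ (w⁻¹ j))) (ν⁻¹ (w⁻¹ j)) (hν _)
      simp only [Equiv.Perm.apply_inv_self] at hkey
      simp only [dotActF, permActF, Pi.mul_apply, Pi.inv_apply, mul_inv_rev, inv_inv,
        Equiv.Perm.mul_apply, Equiv.Perm.inv_apply_self, Equiv.Perm.apply_inv_self]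
      rw [mul_assoc, mul_assoc, hkey]
  refine ⟨hmain, ?_⟩
  rintro t t' ⟨ν, hν, rfl⟩
  exact ⟨w * ν * w⁻¹, (hmain ν hν).1, (hmain ν hν).2 t⟩
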